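/- Pushouts interact with ordinal sum in sLin: suppose the square of monotone surjections f : Fin m → Fin a, g : Fin m → Fin b, p₀ : Fin a → Fin n, p₁ : Fin b → Fin n with p₀ ∘ f = p₁ ∘ g is a pushout in sLin, and likewise the square f' : Fin m' → Fin a', g' : Fin m' → Fin b', p₀' : Fin a' → Fin n', p₁' : Fin b' → Fin n' with p₀' ∘ f' = p₁' ∘ g' is a pushout in sLin. Then the square formed by the ordinal sums f + f' : Fin (m+m') → Fin (a+a'), g + g' : Fin (m+m') → Fin (b+b'), p₀ + p₀' : Fin (a+a') → Fin (n+n'), p₁ + p₁' : Fin (b+b') → Fin (n+n') (which satisfies (p₀ + p₀') ∘ (f + f') = (p₁ + p₁') ∘ (g + g')) is again a pushout in sLin. -/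

import Mathlib

/-- A commuting square `p₀ ∘ f = p₁ ∘ g` of monotone surjections is a pushout in
`sLin` (the category of finite linear orders `Fin n` and monotone surjections). -/
def SLinPushout {m a b n : ℕ} (f : Fin m → Fin a) (g : Fin m → Fin b)
    (p₀ : Fin a → Fin n) (p₁ : Fin b → Fin n) : Prop :=
  ∀ (k : ℕ) (q₀ : Fin a → Fin k) (q₁ : Fin b → Fin k),
    Monotone q₀ → Function.Surjective q₀ → Monotone q₁ → Function.Surjective q₁ →
    q₀ ∘ f = q₁ ∘ g →
    ∃! h : Fin n → Fin k,
      (Monotone h ∧ Function.Surjective h) ∧ h ∘ p₀ = q₀ ∧ h ∘ p₁ = q₁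

/-- The ordinal sum `f + f' : Fin (m + m') → Fin (n + n')` of two maps of finite
linear orders: the first block is mapped by `f` to the first block, the second
block by `f'` to the second block. -/
def ordSum {m n m' n' : ℕ} (f : Fin m → Fin n) (f' : Fin m' → Fin n')
    (i : Fin (m + m')) : Fin (n + n') :=
  if h : (i : ℕ) < m then Fin.castAdd n' (f ⟨i, h⟩)
  else Fin.natAdd n (f' ⟨(i : ℕ) - m, by have := i.isLt; omega⟩)

lemma ordSum_castAdd {m n m' n' : ℕ} (f : Fin m → Fin n) (f' : Fin m' → Fin n') (i : Fin m) :
    ordSum f f' (Fin.castAdd m' i) = Fin.castAdd n' (f i) := by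
  simp [ordSum, i.isLt, Fin.eta]

lemma ordSum_natAdd {m n m' n' : ℕ} (f : Fin m → Fin n) (f' : Fin m' → Fin n') (j : Fin m') :
    ordSum f f' (Fin.natAdd m j) = Fin.natAdd n (f' j) := by
  simp [ordSum]

lemma fin_surj_pos {p k : ℕ} {q : Fin p → Fin k} (hs : Function.Surjective q) (hk : 0 < k) :
    0 < p := by
  obtain ⟨y, -⟩ := hs ⟨0, hk⟩; exact y.pos

lemma mono_surj_zero {p k : ℕ} {q : Fin p → Fin k} (hm : Monotone q)
    (hs : Function.Surjective q) (hp : 0 < p) (hk : 0 < k) : q ⟨0, hp⟩ = ⟨0, hk⟩ := by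
  obtain ⟨y, hy⟩ := hs ⟨0, hk⟩
  have h1 : q ⟨0, hp⟩ ≤ q y := hm (by simp [Fin.le_def])
  rw [hy] at h1
  exact le_antisymm h1 (by simp [Fin.le_def])

lemma mono_surj_last {p k : ℕ} {q : Fin p → Fin k} (hm : Monotone q)
    (hs : Function.Surjective q) (hp : 0 < p) (hk : 0 < k) :
    q ⟨p - 1, by omega⟩ = ⟨k - 1, by omega⟩ := by
  obtain ⟨y, hy⟩ := hs ⟨k - 1, by omega⟩
  have h1 : q y ≤ q ⟨p - 1, by omega⟩ := hm (by simp [Fin.le_def]; omega)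
  rw [hy] at h1
  have h2 : (q ⟨p - 1, by omega⟩ : Fin k).val ≤ k - 1 := by
    have := (q ⟨p - 1, by omega⟩).isLt; omega
  exact le_antisymm (by simpa [Fin.le_def] using h2) h1

lemma ordSum_comp {m a n m' a' n' : ℕ} (f : Fin m → Fin a) (p : Fin a → Fin n)
    (f' : Fin m' → Fin a') (p' : Fin a' → Fin n') :
    ordSum p p' ∘ ordSum f f' = ordSum (p ∘ f) (p' ∘ f') := by
  funext i
  by_cases h : (i : ℕ) < m
  · have : i = Fin.castAdd m' ⟨i, h⟩ := Fin.ext rfl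
    rw [this]
    simp only [Function.comp_apply, ordSum_castAdd]
  · have : i = Fin.natAdd m ⟨(i : ℕ) - m, by have := i.isLt; omega⟩ := Fin.ext (by simp; omega)
    rw [this]
    simp only [Function.comp_apply, ordSum_natAdd]

lemma ordSum_surj {m n m' n' : ℕ} {f : Fin m → Fin n} {f' : Fin m' → Fin n'}
    (hs : Function.Surjective f) (hs' : Function.Surjective f') :
    Function.Surjective (ordSum f f') := by
  intro t
  by_cases ht : (t : ℕ) < n
  · obtain ⟨x, hx⟩ := hs ⟨t, ht⟩
    exact ⟨Fin.castAdd m' x, by rw [ordSum_castAdd, hx]; exact Fin.ext rfl⟩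
  · obtain ⟨x, hx⟩ := hs' ⟨(t : ℕ) - n, by have := t.isLt; omega⟩
    exact ⟨Fin.natAdd m x, by rw [ordSum_natAdd, hx]; exact Fin.ext (by simp; omega)⟩

/-- pushouts interact with ordinal sum in `sLin`: the ordinal sum of
two pushout squares of monotone surjections is again a pushout square. -/
theorem slin_pushout_ordSum {m a b n m' a' b' n' : ℕ}
    (f : Fin m → Fin a) (g : Fin m → Fin b)
    (p₀ : Fin a → Fin n) (p₁ : Fin b → Fin n)
    (f' : Fin m' → Fin a') (g' : Fin m' → Fin b')
    (p₀' : Fin a' → Fin n') (p₁' : Fin b' → Fin n')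
    (hfm : Monotone f) (hfs : Function.Surjective f)
    (hgm : Monotone g) (hgs : Function.Surjective g)
    (hp₀m : Monotone p₀) (hp₀s : Function.Surjective p₀)
    (hp₁m : Monotone p₁) (hp₁s : Function.Surjective p₁)
    (hfm' : Monotone f') (hfs' : Function.Surjective f')
    (hgm' : Monotone g') (hgs' : Function.Surjective g')
    (hp₀m' : Monotone p₀') (hp₀s' : Function.Surjective p₀')
    (hp₁m' : Monotone p₁') (hp₁s' : Function.Surjective p₁')
    (hcomm : p₀ ∘ f = p₁ ∘ g) (hcomm' : p₀' ∘ f' = p₁' ∘ g')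
    (hpo : SLinPushout f g p₀ p₁) (hpo' : SLinPushout f' g' p₀' p₁') :
    (ordSum p₀ p₀') ∘ (ordSum f f') = (ordSum p₁ p₁') ∘ (ordSum g g') ∧
    SLinPushout (ordSum f f') (ordSum g g') (ordSum p₀ p₀') (ordSum p₁ p₁') := by
  refine ⟨by rw [ordSum_comp, ordSum_comp, hcomm, hcomm'], ?_⟩
  intro k q₀ q₁ hq₀m hq₀s hq₁m hq₁s hq
  -- positivity links
  have ham : 0 < a → 0 < m := fun h => fin_surj_pos hfs h
  have hab : 0 < a → 0 < b := fun h => (g ⟨0, ham h⟩).pos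
  have han : 0 < a → 0 < n := fun h => (p₀ ⟨0, h⟩).pos
  have hba : 0 < b → 0 < a := fun h => (f ⟨0, fin_surj_pos hgs h⟩).pos
  have ham' : 0 < a' → 0 < m' := fun h => fin_surj_pos hfs' h
  have hab' : 0 < a' → 0 < b' := fun h => (g' ⟨0, ham' h⟩).pos
  have han' : 0 < a' → 0 < n' := fun h => (p₀' ⟨0, h⟩).pos
  have hba' : 0 < b' → 0 < a' := fun h => (f' ⟨0, fin_surj_pos hgs' h⟩).pos
  -- boundary equalities between q₀ and q₁
  have E1 : ∀ (ha : 0 < a) (hb : 0 < b),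
      q₁ (Fin.castAdd b' ⟨b - 1, by omega⟩) = q₀ (Fin.castAdd a' ⟨a - 1, by omega⟩) := by
    intro ha hb
    have hm : 0 < m := ham ha
    have h1 := congrFun hq (Fin.castAdd m' ⟨m - 1, by omega⟩)
    simp only [Function.comp_apply, ordSum_castAdd] at h1
    rw [mono_surj_last hfm hfs hm ha, mono_surj_last hgm hgs hm hb] at h1
    exact h1.symm
  have E2 : ∀ (ha' : 0 < a') (hb' : 0 < b'),
      q₁ (Fin.natAdd b ⟨0, hb'⟩) = q₀ (Fin.natAdd a ⟨0, ha'⟩) := by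
    intro ha' hb'
    have hm' : 0 < m' := ham' ha'
    have h1 := congrFun hq (Fin.natAdd m ⟨0, hm'⟩)
    simp only [Function.comp_apply, ordSum_natAdd] at h1
    rw [mono_surj_zero hfm' hfs' hm' ha', mono_surj_zero hgm' hgs' hm' hb'] at h1
    exact h1.symm
  -- the split point of Fin k
  obtain ⟨k₀, d, A1, A3, A5, A6, A7, A8, A9, A10, A11, A12⟩ :
      ∃ k₀ d : ℕ,
        (∀ x : Fin a, (q₀ (Fin.castAdd a' x) : ℕ) < k₀) ∧
        (∀ x : Fin a', d ≤ (q₀ (Fin.natAdd a x) : ℕ)) ∧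
        k₀ ≤ k ∧ d ≤ k ∧
        (∀ t : ℕ, t < k → t < k₀ ∨ d ≤ t) ∧
        k₀ ≤ d + 1 ∧
        (0 < k₀ → ∃ x : Fin a, (q₀ (Fin.castAdd a' x) : ℕ) + 1 = k₀) ∧
        (d < k → ∃ x : Fin a', (q₀ (Fin.natAdd a x) : ℕ) = d) ∧
        (0 < k₀ → 0 < a) ∧ (d < k → 0 < a') := by
    by_cases ha : 0 < a <;> by_cases ha' : 0 < a'
    · refine ⟨(q₀ (Fin.castAdd a' ⟨a - 1, by omega⟩) : ℕ) + 1,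
        (q₀ (Fin.natAdd a ⟨0, ha'⟩) : ℕ), ?_, ?_, ?_, ?_, ?_, ?_, ?_, ?_,
        fun _ => ha, fun _ => ha'⟩
      · intro x
        have := hq₀m (show Fin.castAdd a' x ≤ Fin.castAdd a' ⟨a - 1, by omega⟩ by
          simp [Fin.le_def]; omega)
        omega
      · intro x
        exact hq₀m (show Fin.natAdd a ⟨0, ha'⟩ ≤ Fin.natAdd a x by simp [Fin.le_def])
      · exact (q₀ _).isLt
      · exact (q₀ _).isLt.le
      · intro t ht
        obtain ⟨y, hy⟩ := hq₀s ⟨t, ht⟩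
        by_cases hya : (y : ℕ) < a
        · left
          have h2 : q₀ y = q₀ (Fin.castAdd a' ⟨(y : ℕ), hya⟩) := by
            exact congrArg q₀ (Fin.ext rfl)
          have := hq₀m (show Fin.castAdd a' (⟨(y : ℕ), hya⟩ : Fin a)
              ≤ Fin.castAdd a' ⟨a - 1, by omega⟩ by simp [Fin.le_def]; omega)
          rw [← h2, hy] at this
          simpa using Nat.lt_succ_of_le this
        · right
          have h2 : q₀ y = q₀ (Fin.natAdd a ⟨(y : ℕ) - a, by have := y.isLt; omega⟩) := by
            exact congrArg q₀ (Fin.ext (by simp <;> omega))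
          have := hq₀m (show Fin.natAdd a (⟨0, ha'⟩ : Fin a')
              ≤ Fin.natAdd a ⟨(y : ℕ) - a, by have := y.isLt; omega⟩ by simp [Fin.le_def])
          rw [← h2, hy] at this
          simpa using Fin.le_def.mp this
      · have := hq₀m (show Fin.castAdd a' (⟨a - 1, by omega⟩ : Fin a)
            ≤ Fin.natAdd a ⟨0, ha'⟩ by simp [Fin.le_def] <;> omega)
        omega
      · exact fun _ => ⟨⟨a - 1, by omega⟩, rfl⟩
      · exact fun _ => ⟨⟨0, ha'⟩, rfl⟩
    · -- a > 0, a' = 0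
      refine ⟨(q₀ (Fin.castAdd a' ⟨a - 1, by omega⟩) : ℕ) + 1, k, ?_, ?_, ?_, le_refl k,
        ?_, ?_, ?_, ?_, fun _ => ha, fun h => absurd h (by omega)⟩
      · intro x
        have := hq₀m (show Fin.castAdd a' x ≤ Fin.castAdd a' ⟨a - 1, by omega⟩ by
          simp [Fin.le_def]; omega)
        omega
      · intro x; exact absurd x.isLt (by omega)
      · exact (q₀ _).isLt
      · intro t ht
        obtain ⟨y, hy⟩ := hq₀s ⟨t, ht⟩
        left
        have hya : (y : ℕ) < a := by have := y.isLt; omega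
        have h2 : q₀ y = q₀ (Fin.castAdd a' ⟨(y : ℕ), hya⟩) := by
          exact congrArg q₀ (Fin.ext rfl)
        have := hq₀m (show Fin.castAdd a' (⟨(y : ℕ), hya⟩ : Fin a)
            ≤ Fin.castAdd a' ⟨a - 1, by omega⟩ by simp [Fin.le_def]; omega)
        rw [← h2, hy] at this
        simpa using Nat.lt_succ_of_le this
      · have := (q₀ (Fin.castAdd a' ⟨a - 1, by omega⟩)).isLt; omega
      · exact fun _ => ⟨⟨a - 1, by omega⟩, rfl⟩
      · intro h; omega
    · -- a = 0, a' > 0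
      refine ⟨0, (q₀ (Fin.natAdd a ⟨0, ha'⟩) : ℕ), ?_, ?_, by omega, (q₀ _).isLt.le,
        ?_, by omega, by omega, ?_, by omega, fun _ => ha'⟩
      · intro x; exact absurd x.pos (by omega)
      · intro x
        exact hq₀m (show Fin.natAdd a ⟨0, ha'⟩ ≤ Fin.natAdd a x by simp [Fin.le_def])
      · intro t ht
        right
        obtain ⟨y, hy⟩ := hq₀s ⟨t, ht⟩
        have h2 : q₀ y = q₀ (Fin.natAdd a ⟨(y : ℕ) - a, by have := y.isLt; omega⟩) := by
          exact congrArg q₀ (Fin.ext (by simp <;> omega))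
        have := hq₀m (show Fin.natAdd a (⟨0, ha'⟩ : Fin a')
            ≤ Fin.natAdd a ⟨(y : ℕ) - a, by have := y.isLt; omega⟩ by simp [Fin.le_def])
        rw [← h2, hy] at this
        simpa using Fin.le_def.mp this
      · exact fun _ => ⟨⟨0, ha'⟩, rfl⟩
    · -- a = a' = 0
      have hk : k = 0 := by
        by_contra hk
        obtain ⟨y, -⟩ := hq₀s ⟨0, by omega⟩
        have := y.isLt; omega
    
      exact ⟨0, 0, fun x => absurd x.pos (by omega), fun x => by omega, by omega, by omega,
        fun t ht => by omega, by omega, by omega, fun h => by omega, by omega, fun h => by omega⟩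
  -- q₁-side bounds
  have A2 : ∀ x : Fin b, (q₁ (Fin.castAdd b' x) : ℕ) < k₀ := by
    intro x
    have hb : 0 < b := x.pos
    have ha : 0 < a := hba hb
    have h1 : q₁ (Fin.castAdd b' x) ≤ q₁ (Fin.castAdd b' ⟨b - 1, by omega⟩) :=
      hq₁m (by simp [Fin.le_def]; omega)
    have h2 := E1 ha hb
    have h3 := A1 ⟨a - 1, by omega⟩
    rw [h2] at h1
    exact lt_of_le_of_lt h1 h3
  have A4 : ∀ x : Fin b', d ≤ (q₁ (Fin.natAdd b x) : ℕ) := by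
    intro x
    have hb' : 0 < b' := x.pos
    have ha' : 0 < a' := hba' hb'
    have h1 : q₁ (Fin.natAdd b ⟨0, hb'⟩) ≤ q₁ (Fin.natAdd b x) :=
      hq₁m (by simp [Fin.le_def])
    have h2 := E2 ha' hb'
    have h3 := A3 ⟨0, ha'⟩
    rw [h2] at h1
    exact le_trans h3 h1
  have A9' : 0 < k₀ → ∃ x : Fin b, (q₁ (Fin.castAdd b' x) : ℕ) + 1 = k₀ := by
    intro hk₀
    have ha : 0 < a := A11 hk₀
    have hb : 0 < b := hab ha
    obtain ⟨x₀, hx₀⟩ := A9 hk₀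
    refine ⟨⟨b - 1, by omega⟩, ?_⟩
    rw [E1 ha hb]
    have h1 : q₀ (Fin.castAdd a' x₀) ≤ q₀ (Fin.castAdd a' ⟨a - 1, by omega⟩) :=
      hq₀m (by simp [Fin.le_def]; omega)
    have h3 := A1 ⟨a - 1, by omega⟩
    omega
  have A10' : d < k → ∃ x : Fin b', (q₁ (Fin.natAdd b x) : ℕ) = d := by
    intro hdk
    have ha' : 0 < a' := A12 hdk
    have hb' : 0 < b' := hab' ha'
    obtain ⟨x₁, hx₁⟩ := A10 hdk
    refine ⟨⟨0, hb'⟩, ?_⟩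
    rw [E2 ha' hb']
    have h1 : q₀ (Fin.natAdd a ⟨0, ha'⟩) ≤ q₀ (Fin.natAdd a x₁) :=
      hq₀m (by simp [Fin.le_def])
    have h3 := A3 ⟨0, ha'⟩
    omega
  -- restricted squares
  set Q₀ : Fin a → Fin k₀ := fun x => ⟨(q₀ (Fin.castAdd a' x) : ℕ), A1 x⟩ with hQ₀
  set Q₁ : Fin b → Fin k₀ := fun x => ⟨(q₁ (Fin.castAdd b' x) : ℕ), A2 x⟩ with hQ₁
  set R₀ : Fin a' → Fin (k - d) := fun x =>
    ⟨(q₀ (Fin.natAdd a x) : ℕ) - d, by have h1 := (q₀ (Fin.natAdd a x)).isLt; have := A3 x; omega⟩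
    with hR₀
  set R₁ : Fin b' → Fin (k - d) := fun x =>
    ⟨(q₁ (Fin.natAdd b x) : ℕ) - d, by have h1 := (q₁ (Fin.natAdd b x)).isLt; have := A4 x; omega⟩
    with hR₁
  have hQ₀v : ∀ x : Fin a, (Q₀ x : ℕ) = (q₀ (Fin.castAdd a' x) : ℕ) := fun x => rfl
  have hQ₁v : ∀ x : Fin b, (Q₁ x : ℕ) = (q₁ (Fin.castAdd b' x) : ℕ) := fun x => rfl
  have hR₀v : ∀ x : Fin a', (R₀ x : ℕ) = (q₀ (Fin.natAdd a x) : ℕ) - d := fun x => rfl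
  have hR₁v : ∀ x : Fin b', (R₁ x : ℕ) = (q₁ (Fin.natAdd b x) : ℕ) - d := fun x => rfl
  obtain ⟨h₀, ⟨⟨h₀m, h₀s⟩, h₀c₀, h₀c₁⟩, -⟩ := hpo k₀ Q₀ Q₁
    (fun x y hxy => by
      rw [Fin.le_def, hQ₀v, hQ₀v]
      exact Fin.le_def.mp (hq₀m (show Fin.castAdd a' x ≤ Fin.castAdd a' y by
        rw [Fin.le_def]; simpa using Fin.le_def.mp hxy)))
    (by
      rintro ⟨t, ht⟩
      obtain ⟨x₀, hx₀⟩ := A9 (by omega)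
      obtain ⟨y, hy⟩ := hq₀s ⟨t, by omega⟩
      have hyv : (q₀ y : ℕ) = t := by rw [hy]
      by_cases hya : (y : ℕ) < a
      · refine ⟨⟨(y : ℕ), hya⟩, Fin.ext ?_⟩
        rw [hQ₀v]
        have : q₀ (Fin.castAdd a' ⟨(y : ℕ), hya⟩) = q₀ y := congrArg q₀ (Fin.ext rfl)
        rw [this, hyv]
      · refine ⟨x₀, Fin.ext ?_⟩
        rw [hQ₀v]
        have h2 : q₀ y = q₀ (Fin.natAdd a ⟨(y : ℕ) - a, by have := y.isLt; omega⟩) :=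
          congrArg q₀ (Fin.ext (by simp <;> omega))
        have h1 : (q₀ (Fin.castAdd a' x₀) : ℕ) ≤ (q₀ (Fin.natAdd a ⟨(y : ℕ) - a, by
            have := y.isLt; omega⟩) : ℕ) :=
          Fin.le_def.mp (hq₀m (by rw [Fin.le_def]; simp; omega))
        rw [← h2, hyv] at h1
        show _ = t
        omega)
    (fun x y hxy => by
      rw [Fin.le_def, hQ₁v, hQ₁v]
      exact Fin.le_def.mp (hq₁m (show Fin.castAdd b' x ≤ Fin.castAdd b' y by
        rw [Fin.le_def]; simpa using Fin.le_def.mp hxy)))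
    (by
      rintro ⟨t, ht⟩
      obtain ⟨x₀, hx₀⟩ := A9' (by omega)
      obtain ⟨y, hy⟩ := hq₁s ⟨t, by omega⟩
      have hyv : (q₁ y : ℕ) = t := by rw [hy]
      by_cases hya : (y : ℕ) < b
      · refine ⟨⟨(y : ℕ), hya⟩, Fin.ext ?_⟩
        rw [hQ₁v]
        have : q₁ (Fin.castAdd b' ⟨(y : ℕ), hya⟩) = q₁ y := congrArg q₁ (Fin.ext rfl)
        rw [this, hyv]
      · refine ⟨x₀, Fin.ext ?_⟩
        rw [hQ₁v]
        have h2 : q₁ y = q₁ (Fin.natAdd b ⟨(y : ℕ) - b, by have := y.isLt; omega⟩) :=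
          congrArg q₁ (Fin.ext (by simp <;> omega))
        have h1 : (q₁ (Fin.castAdd b' x₀) : ℕ) ≤ (q₁ (Fin.natAdd b ⟨(y : ℕ) - b, by
            have := y.isLt; omega⟩) : ℕ) :=
          Fin.le_def.mp (hq₁m (by rw [Fin.le_def]; simp; omega))
        rw [← h2, hyv] at h1
        show _ = t
        omega)
    (by
      funext i
      have h1 := congrFun hq (Fin.castAdd m' i)
      simp only [Function.comp_apply, ordSum_castAdd] at h1
      refine Fin.ext ?_
      show (Q₀ (f i) : ℕ) = (Q₁ (g i) : ℕ)
      rw [hQ₀v, hQ₁v, h1])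
  obtain ⟨h₁, ⟨⟨h₁m, h₁s⟩, h₁c₀, h₁c₁⟩, -⟩ := hpo' (k - d) R₀ R₁
    (fun x y hxy => by
      rw [Fin.le_def, hR₀v, hR₀v]
      have := Fin.le_def.mp (hq₀m (show Fin.natAdd a x ≤ Fin.natAdd a y by
        rw [Fin.le_def]; simpa using Fin.le_def.mp hxy))
      omega)
    (by
      rintro ⟨t, ht⟩
      have hdk : d < k := by omega
      obtain ⟨x₁, hx₁⟩ := A10 hdk
      obtain ⟨y, hy⟩ := hq₀s ⟨d + t, by omega⟩
      have hyv : (q₀ y : ℕ) = d + t := by rw [hy]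
      by_cases hya : (y : ℕ) < a
      · refine ⟨x₁, Fin.ext ?_⟩
        rw [hR₀v]
        have h1 : (q₀ y : ℕ) ≤ (q₀ (Fin.natAdd a x₁) : ℕ) :=
          Fin.le_def.mp (hq₀m (by rw [Fin.le_def]; simp; omega))
        rw [hyv] at h1
        show _ = t
        omega
      · refine ⟨⟨(y : ℕ) - a, by have := y.isLt; omega⟩, Fin.ext ?_⟩
        rw [hR₀v]
        have h2 : q₀ (Fin.natAdd a ⟨(y : ℕ) - a, by have := y.isLt; omega⟩) = q₀ y :=
          congrArg q₀ (Fin.ext (by simp <;> omega))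
        rw [h2, hyv]
        show _ = t
        omega)
    (fun x y hxy => by
      rw [Fin.le_def, hR₁v, hR₁v]
      have := Fin.le_def.mp (hq₁m (show Fin.natAdd b x ≤ Fin.natAdd b y by
        rw [Fin.le_def]; simpa using Fin.le_def.mp hxy))
      omega)
    (by
      rintro ⟨t, ht⟩
      have hdk : d < k := by omega
      obtain ⟨x₁, hx₁⟩ := A10' hdk
      obtain ⟨y, hy⟩ := hq₁s ⟨d + t, by omega⟩
      have hyv : (q₁ y : ℕ) = d + t := by rw [hy]
      by_cases hya : (y : ℕ) < b
      · refine ⟨x₁, Fin.ext ?_⟩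
        rw [hR₁v]
        have h1 : (q₁ y : ℕ) ≤ (q₁ (Fin.natAdd b x₁) : ℕ) :=
          Fin.le_def.mp (hq₁m (by rw [Fin.le_def]; simp; omega))
        rw [hyv] at h1
        show _ = t
        omega
      · refine ⟨⟨(y : ℕ) - b, by have := y.isLt; omega⟩, Fin.ext ?_⟩
        rw [hR₁v]
        have h2 : q₁ (Fin.natAdd b ⟨(y : ℕ) - b, by have := y.isLt; omega⟩) = q₁ y :=
          congrArg q₁ (Fin.ext (by simp <;> omega))
        rw [h2, hyv]
        show _ = t
        omega)
    (by
      funext i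
      have h1 := congrFun hq (Fin.natAdd m i)
      simp only [Function.comp_apply, ordSum_natAdd] at h1
      refine Fin.ext ?_
      show (R₀ (f' i) : ℕ) = (R₁ (g' i) : ℕ)
      rw [hR₀v, hR₁v, h1])
  -- value facts for h₀, h₁ compositions
  have h₀c₀v : ∀ z : Fin a, (h₀ (p₀ z) : ℕ) = (q₀ (Fin.castAdd a' z) : ℕ) := by
    intro z
    have t1 := congrFun h₀c₀ z
    simp only [Function.comp_apply] at t1
    rw [t1, hQ₀v]
  have h₀c₁v : ∀ z : Fin b, (h₀ (p₁ z) : ℕ) = (q₁ (Fin.castAdd b' z) : ℕ) := by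
    intro z
    have t1 := congrFun h₀c₁ z
    simp only [Function.comp_apply] at t1
    rw [t1, hQ₁v]
  have h₁c₀v : ∀ z : Fin a', (h₁ (p₀' z) : ℕ) = (q₀ (Fin.natAdd a z) : ℕ) - d := by
    intro z
    have t1 := congrFun h₁c₀ z
    simp only [Function.comp_apply] at t1
    rw [t1, hR₀v]
  have h₁c₁v : ∀ z : Fin b', (h₁ (p₁' z) : ℕ) = (q₁ (Fin.natAdd b z) : ℕ) - d := by
    intro z
    have t1 := congrFun h₁c₁ z
    simp only [Function.comp_apply] at t1
    rw [t1, hR₁v]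
  -- glue
  set H : Fin (n + n') → Fin k := fun x =>
    if hx : (x : ℕ) < n then
      ⟨(h₀ ⟨(x : ℕ), hx⟩ : ℕ), lt_of_lt_of_le (h₀ _).isLt A5⟩
    else
      ⟨d + (h₁ ⟨(x : ℕ) - n, by have := x.isLt; omega⟩ : ℕ), by
        have := (h₁ ⟨(x : ℕ) - n, by have := x.isLt; omega⟩).isLt; omega⟩
    with hH
  have Hlow : ∀ (z : Fin (n + n')) (hz : (z : ℕ) < n), (H z : ℕ) = (h₀ ⟨(z : ℕ), hz⟩ : ℕ) := by
    intro z hz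
    simp only [hH]
    rw [dif_pos hz]
  have Hhigh : ∀ (z : Fin (n + n')) (hz : ¬ (z : ℕ) < n),
      (H z : ℕ) = d + (h₁ ⟨(z : ℕ) - n, by have := z.isLt; omega⟩ : ℕ) := by
    intro z hz
    simp only [hH]
    rw [dif_neg hz]
  have Hc₀ : H ∘ ordSum p₀ p₀' = q₀ := by
    funext x
    refine Fin.ext ?_
    show (H (ordSum p₀ p₀' x) : ℕ) = (q₀ x : ℕ)
    by_cases hx : (x : ℕ) < a
    · have hrw : ordSum p₀ p₀' x = Fin.castAdd n' (p₀ ⟨(x : ℕ), hx⟩) := by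
        unfold ordSum; rw [dif_pos hx]
      rw [hrw]
      have hz : ((Fin.castAdd n' (p₀ ⟨(x : ℕ), hx⟩) : Fin (n + n')) : ℕ) < n := by
        simpa using (p₀ ⟨(x : ℕ), hx⟩).isLt
      rw [Hlow _ hz]
      have h1 : (⟨((Fin.castAdd n' (p₀ ⟨(x : ℕ), hx⟩) : Fin (n + n')) : ℕ), hz⟩ : Fin n)
          = p₀ ⟨(x : ℕ), hx⟩ := Fin.ext (by simp)
      rw [h1, h₀c₀v]
      exact congrArg (fun z : Fin (a + a') => (q₀ z : ℕ)) (Fin.ext rfl)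
    · have hax : (x : ℕ) - a < a' := by have := x.isLt; omega
      have hrw : ordSum p₀ p₀' x = Fin.natAdd n (p₀' ⟨(x : ℕ) - a, hax⟩) := by
        unfold ordSum; rw [dif_neg hx]
      rw [hrw]
      have hz : ¬ ((Fin.natAdd n (p₀' ⟨(x : ℕ) - a, hax⟩) : Fin (n + n')) : ℕ) < n := by
        simp
      rw [Hhigh _ hz]
      have h1 : (⟨((Fin.natAdd n (p₀' ⟨(x : ℕ) - a, hax⟩) : Fin (n + n')) : ℕ) - n, by
          have := (p₀' ⟨(x : ℕ) - a, hax⟩).isLt; simp <;> omega⟩ : Fin n')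
          = p₀' ⟨(x : ℕ) - a, hax⟩ := Fin.ext (by simp)
      rw [h1, h₁c₀v]
      have h3 := A3 ⟨(x : ℕ) - a, hax⟩
      have h4 : q₀ (Fin.natAdd a ⟨(x : ℕ) - a, hax⟩) = q₀ x :=
        congrArg q₀ (Fin.ext (by simp <;> omega))
      rw [h4] at h3 ⊢
      omega
  have Hc₁ : H ∘ ordSum p₁ p₁' = q₁ := by
    funext x
    refine Fin.ext ?_
    show (H (ordSum p₁ p₁' x) : ℕ) = (q₁ x : ℕ)
    by_cases hx : (x : ℕ) < b
    · have hrw : ordSum p₁ p₁' x = Fin.castAdd n' (p₁ ⟨(x : ℕ), hx⟩) := by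
        unfold ordSum; rw [dif_pos hx]
      rw [hrw]
      have hz : ((Fin.castAdd n' (p₁ ⟨(x : ℕ), hx⟩) : Fin (n + n')) : ℕ) < n := by
        simpa using (p₁ ⟨(x : ℕ), hx⟩).isLt
      rw [Hlow _ hz]
      have h1 : (⟨((Fin.castAdd n' (p₁ ⟨(x : ℕ), hx⟩) : Fin (n + n')) : ℕ), hz⟩ : Fin n)
          = p₁ ⟨(x : ℕ), hx⟩ := Fin.ext (by simp)
      rw [h1, h₀c₁v]
      exact congrArg (fun z : Fin (b + b') => (q₁ z : ℕ)) (Fin.ext rfl)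
    · have hax : (x : ℕ) - b < b' := by have := x.isLt; omega
      have hrw : ordSum p₁ p₁' x = Fin.natAdd n (p₁' ⟨(x : ℕ) - b, hax⟩) := by
        unfold ordSum; rw [dif_neg hx]
      rw [hrw]
      have hz : ¬ ((Fin.natAdd n (p₁' ⟨(x : ℕ) - b, hax⟩) : Fin (n + n')) : ℕ) < n := by
        simp
      rw [Hhigh _ hz]
      have h1 : (⟨((Fin.natAdd n (p₁' ⟨(x : ℕ) - b, hax⟩) : Fin (n + n')) : ℕ) - n, by
          have := (p₁' ⟨(x : ℕ) - b, hax⟩).isLt; simp <;> omega⟩ : Fin n')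
          = p₁' ⟨(x : ℕ) - b, hax⟩ := Fin.ext (by simp)
      rw [h1, h₁c₁v]
      have h3 := A4 ⟨(x : ℕ) - b, hax⟩
      have h4 : q₁ (Fin.natAdd b ⟨(x : ℕ) - b, hax⟩) = q₁ x :=
        congrArg q₁ (Fin.ext (by simp <;> omega))
      rw [h4] at h3 ⊢
      omega
  refine ⟨H, ⟨⟨?_, ?_⟩, Hc₀, Hc₁⟩, ?_⟩
  · -- monotone
    intro x y hxy
    rw [Fin.le_def]
    have hxyv : (x : ℕ) ≤ (y : ℕ) := Fin.le_def.mp hxy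
    by_cases hx : (x : ℕ) < n <;> by_cases hy : (y : ℕ) < n
    · rw [Hlow _ hx, Hlow _ hy]
      exact Fin.le_def.mp (h₀m (show (⟨(x : ℕ), hx⟩ : Fin n) ≤ ⟨(y : ℕ), hy⟩ by
        rw [Fin.le_def]; exact hxyv))
    · rw [Hlow _ hx, Hhigh _ hy]
      have h1 := (h₀ ⟨(x : ℕ), hx⟩).isLt
      omega
    · omega
    · rw [Hhigh _ hx, Hhigh _ hy]
      have := Fin.le_def.mp (h₁m (show (⟨(x : ℕ) - n, by have := x.isLt; omega⟩ : Fin n')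
          ≤ ⟨(y : ℕ) - n, by have := y.isLt; omega⟩ by rw [Fin.le_def]; show (x : ℕ) - n ≤ (y : ℕ) - n; omega))
      omega
  · -- surjective
    intro t
    rcases A7 (t : ℕ) t.isLt with ht | ht
    · have ha : 0 < a := A11 (by omega)
      have hn : 0 < n := han ha
      obtain ⟨j, hj⟩ := h₀s ⟨(t : ℕ), ht⟩
      have hjv : (h₀ j : ℕ) = (t : ℕ) := by rw [hj]
      refine ⟨⟨(j : ℕ), by have := j.isLt; omega⟩, Fin.ext ?_⟩
      have hz : ((⟨(j : ℕ), by have := j.isLt; omega⟩ : Fin (n + n')) : ℕ) < n := j.isLt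
      rw [Hlow _ hz]
      have h1 : (⟨((⟨(j : ℕ), by have := j.isLt; omega⟩ : Fin (n + n')) : ℕ), hz⟩ : Fin n) = j :=
        Fin.ext rfl
      rw [h1, hjv]
    · have hdk : d < k := lt_of_le_of_lt ht t.isLt
      have ha' : 0 < a' := A12 hdk
      have hn' : 0 < n' := han' ha'
      obtain ⟨j, hj⟩ := h₁s ⟨(t : ℕ) - d, by have := t.isLt; omega⟩
      have hjv : (h₁ j : ℕ) = (t : ℕ) - d := by rw [hj]
      refine ⟨⟨n + (j : ℕ), by have := j.isLt; omega⟩, Fin.ext ?_⟩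
      have hz : ¬ ((⟨n + (j : ℕ), by have := j.isLt; omega⟩ : Fin (n + n')) : ℕ) < n := by
        simp
      rw [Hhigh _ hz]
      have h1 : (⟨((⟨n + (j : ℕ), by have := j.isLt; omega⟩ : Fin (n + n')) : ℕ) - n, by
          have := j.isLt; simp <;> omega⟩ : Fin n') = j := Fin.ext (by simp)
      rw [h1, hjv]
      show d + ((t : ℕ) - d) = (t : ℕ)
      omega
  · -- uniqueness
    rintro h' ⟨-, h'c₀, -⟩
    funext t
    obtain ⟨y, hy⟩ := ordSum_surj hp₀s hp₀s' t
    rw [← hy]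
    calc h' (ordSum p₀ p₀' y) = q₀ y := congrFun h'c₀ y
    _ = H (ordSum p₀ p₀' y) := (congrFun Hc₀ y).symm
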